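/- arXiv:1106.6002 — 3 statements merged into one kernel-verified Lean document; each statement's English description precedes it below -/
import Mathlib

section
/- Fix n ≥ 1, θ ∈ ℝ, σ > 0, ξ > 0, η > 0 and a scaling factor α > 0. Let Z be a real random variable with Gaussian law N(θ, σ²ξ²/n) and let θ̂_S = sign(Z)(|Z| − σξη)_+ be the soft-thresholding estimator, where (·)_+ = max(·, 0). Then for every x ∈ ℝ, P(σ^{−1}α(θ̂_S − θ) ≤ x) = Φ(n^{1/2} x/(α ξ) + n^{1/2} η)·1(x/α + θ/σ ≥ 0) + Φ(n^{1/2} x/(α ξ) − n^{1/2} η)·1(x/α + θ/σ < 0). -/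
open MeasureTheory ProbabilityTheory Filter Set
open scoped NNReal

/-- Standard normal cdf. -/
noncomputable def Phi (x : ℝ) : ℝ :=
  ∫ t in Iic x, (Real.sqrt (2 * Real.pi))⁻¹ * Real.exp (-t ^ 2 / 2)

/-- Standard normal pdf. -/
noncomputable def stdPhi (t : ℝ) : ℝ :=
  (Real.sqrt (2 * Real.pi))⁻¹ * Real.exp (-t ^ 2 / 2)

/-- Extension of `Phi` to the extended reals, with `PhiE ⊤ = 1` and `PhiE ⊥ = 0`. -/
noncomputable def PhiE (z : EReal) : ℝ :=
  if z = ⊤ then 1 else if z = ⊥ then 0 else Phi z.toReal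

/-- Density of `m^{-1/2}` times the square root of a chi-square with `m` degrees of freedom. -/
noncomputable def rho (m : ℕ) (s : ℝ) : ℝ :=
  if 0 < s then
    (2 : ℝ) ^ ((1 : ℝ) - (m : ℝ) / 2) * (Real.Gamma ((m : ℝ) / 2))⁻¹ * Real.sqrt m *
      ((m : ℝ) * s ^ 2) ^ (((m : ℝ) - 1) / 2) * Real.exp (-(m : ℝ) * s ^ 2 / 2)
  else 0

lemma std_Iic (a : ℝ) : (gaussianReal 0 1 (Iic a)).toReal = Phi a := by
  rw [gaussianReal_apply_eq_integral 0 one_ne_zero,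
    ENNReal.toReal_ofReal (setIntegral_nonneg measurableSet_Iic
      fun y _ => gaussianPDFReal_nonneg _ _ _)]
  unfold Phi gaussianPDFReal
  norm_num

lemma gauss_Iic (μ : ℝ) (v : ℝ≥0) (hv : v ≠ 0) (t : ℝ) :
    (gaussianReal μ v (Iic t)).toReal = Phi ((t - μ) / Real.sqrt v) := by
  have hv' : (0:ℝ) < (v:ℝ) := NNReal.coe_pos.mpr (pos_iff_ne_zero.mpr hv)
  have hc : (0:ℝ) < Real.sqrt v := Real.sqrt_pos.mpr hv'
  have hmap : gaussianReal μ v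
      = ((gaussianReal 0 1).map ((Real.sqrt v) * ·)).map (· + μ) := by
    rw [gaussianReal_map_const_mul, gaussianReal_map_add_const]
    congr 1
    · ring
    · ext
      simp [Real.sq_sqrt hv'.le]
  rw [hmap, Measure.map_apply (measurable_add_const μ) measurableSet_Iic,
    preimage_add_const_Iic,
    Measure.map_apply (measurable_const_mul _) measurableSet_Iic,
    preimage_const_mul_Iic₀ _ hc, std_Iic]

lemma soft_set (lam c : ℝ) (hl : 0 < lam) :
    {z : ℝ | Real.sign z * max (|z| - lam) 0 ≤ c} =
      Iic (if 0 ≤ c then c + lam else c - lam) := by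
  ext z
  simp only [mem_setOf_eq, mem_Iic]
  rcases lt_trichotomy z 0 with hz | hz | hz
  · rw [Real.sign_of_neg hz, abs_of_neg hz]
    rcases le_or_gt (-z) lam with h | h
    · rw [max_eq_right (by linarith)]
      split_ifs with hc <;> constructor <;> intro h' <;> linarith
    · rw [max_eq_left (by linarith)]
      split_ifs with hc <;> constructor <;> intro h' <;> nlinarith
  · subst hz
    simp only [Real.sign_zero, zero_mul]
    split_ifs with hc <;> constructor <;> intro h' <;> linarith
  · rw [Real.sign_of_pos hz, abs_of_pos hz, one_mul]
    rcases le_or_gt z lam with h | h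
    · rw [max_eq_right (by linarith)]
      split_ifs with hc <;> constructor <;> intro h' <;> linarith
    · rw [max_eq_left (by linarith)]
      split_ifs with hc <;> constructor <;> intro h' <;> linarith

/-- finite-sample cdf of the scaled and centered infeasible
soft-thresholding estimator. -/
theorem stmt_11 (n : ℕ) (hn : 1 ≤ n) (θ σ ξ η α : ℝ)
    (hσ : 0 < σ) (hξ : 0 < ξ) (hη : 0 < η) (hα : 0 < α) (x : ℝ) :
    (gaussianReal θ (Real.toNNReal (σ ^ 2 * ξ ^ 2 / n))
        {z : ℝ | σ⁻¹ * α * (Real.sign z * max (|z| - σ * ξ * η) 0 - θ) ≤ x}).toReal =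
      Phi (Real.sqrt n * x / (α * ξ) + Real.sqrt n * η) *
          (if 0 ≤ x / α + θ / σ then 1 else 0)
        + Phi (Real.sqrt n * x / (α * ξ) - Real.sqrt n * η) *
          (if x / α + θ / σ < 0 then 1 else 0) := by
  have hn' : (0:ℝ) < n := by exact_mod_cast Nat.lt_of_lt_of_le Nat.zero_lt_one hn
  have hsn : (0:ℝ) < Real.sqrt n := Real.sqrt_pos.mpr hn'
  set v : ℝ≥0 := Real.toNNReal (σ ^ 2 * ξ ^ 2 / n) with hvdef
  have hv : v ≠ 0 := ne_of_gt (Real.toNNReal_pos.mpr (by positivity))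
  have hvc : (v:ℝ) = σ ^ 2 * ξ ^ 2 / n := Real.coe_toNNReal _ (by positivity)
  have hsqv : Real.sqrt v = σ * ξ / Real.sqrt n := by
    rw [hvc, show σ ^ 2 * ξ ^ 2 / (n:ℝ) = (σ * ξ / Real.sqrt n) ^ 2 by
      rw [div_pow, mul_pow, Real.sq_sqrt hn'.le]]
    exact Real.sqrt_sq (by positivity)
  have key : ∀ y : ℝ, (σ⁻¹ * α * (y - θ) ≤ x ↔ y ≤ θ + σ * x / α) := by
    intro y
    rw [show σ⁻¹ * α * (y - θ) = (y - θ) * α / σ by field_simp, div_le_iff₀ hσ,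
      ← le_div_iff₀ hα, sub_le_iff_le_add', show x * σ / α = σ * x / α by ring]
  have hset : {z : ℝ | σ⁻¹ * α * (Real.sign z * max (|z| - σ * ξ * η) 0 - θ) ≤ x}
      = Iic (if 0 ≤ θ + σ * x / α then θ + σ * x / α + σ * ξ * η
             else θ + σ * x / α - σ * ξ * η) := by
    rw [← soft_set (σ * ξ * η) (θ + σ * x / α) (by positivity)]
    ext z
    simp only [mem_setOf_eq]
    exact key _
  have hceq : (0 ≤ θ + σ * x / α) ↔ (0 ≤ x / α + θ / σ) := by
    rw [show θ + σ * x / α = σ * (x / α + θ / σ) by field_simp; ring]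
    exact mul_nonneg_iff_of_pos_left hσ
  rw [hset, gauss_Iic θ v hv, hsqv]
  by_cases h0 : 0 ≤ x / α + θ / σ
  · rw [if_pos (hceq.mpr h0), if_pos h0, if_neg (not_lt.mpr h0), mul_one, mul_zero, add_zero]
    congr 1
    field_simp
    ring
  · rw [if_neg (fun h => h0 (hceq.mp h)), if_neg h0, if_pos (not_le.mp h0),
      mul_one, mul_zero, zero_add]
    congr 1
    field_simp
    ring
end

section
/- Fix n ≥ 1, an integer k with 1 ≤ k < n, θ ∈ ℝ, σ > 0, ξ > 0, η > 0 and a scaling factor α > 0. Let Z be a real random variable with Gaussian law N(θ, σ²ξ²/n), let S be independent of Z with density ρ_{n−k}, and let θ̃_S = sign(Z)(|Z| − σSξη)_+ be the feasible soft-thresholding estimator, where (·)_+ = max(·, 0). Then for every x ∈ ℝ, P(σ^{−1}α(θ̃_S − θ) ≤ x) = (∫_0^∞ Φ(n^{1/2} x/(α ξ) + n^{1/2} s η) ρ_{n−k}(s) ds)·1(x/α + θ/σ ≥ 0) + (∫_0^∞ Φ(n^{1/2} x/(α ξ) − n^{1/2} s η) ρ_{n−k}(s) ds)·1(x/α + θ/σ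 < 0). -/
open MeasureTheory ProbabilityTheory Filter Set

/-- Joint law of the least-squares coordinate `Z ~ N(θ, σ²ξ²/n)` and the independent
variance-estimator ratio `S` with density `rho m`. -/
noncomputable def jointMeas (n m : ℕ) (ξ θ σ : ℝ) : Measure (ℝ × ℝ) :=
  (gaussianReal θ (Real.toNNReal (σ ^ 2 * ξ ^ 2 / n))).prod
    (volume.withDensity fun s => ENNReal.ofReal (rho m s))

/-- Feasible hard-thresholding estimator `Z · 1(|Z| > σSξη)`. -/
noncomputable def hardF (σ ξ η : ℝ) (p : ℝ × ℝ) : ℝ :=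
  if σ * p.2 * ξ * η < |p.1| then p.1 else 0

/-- Feasible soft-thresholding estimator `sign(Z)(|Z| − σSξη)₊`. -/
noncomputable def softF (σ ξ η : ℝ) (p : ℝ × ℝ) : ℝ :=
  Real.sign p.1 * max (|p.1| - σ * p.2 * ξ * η) 0

/-- Feasible adaptive soft-thresholding estimator `Z(1 − σ²S²ξ²η²/Z²)₊`. -/
noncomputable def adaptF (σ ξ η : ℝ) (p : ℝ × ℝ) : ℝ :=
  if p.1 = 0 then 0 else p.1 * max (1 - (σ * p.2 * ξ * η) ^ 2 / p.1 ^ 2) 0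

open scoped NNReal ENNReal

lemma measurable_realSign : Measurable Real.sign := by
  unfold Real.sign
  exact Measurable.ite measurableSet_Iio measurable_const
    (Measurable.ite measurableSet_Ioi measurable_const measurable_const)

lemma measurable_rho (m : ℕ) : Measurable (rho m) := by
  unfold rho
  refine Measurable.ite measurableSet_Ioi ?_ measurable_const
  fun_prop

lemma rho_nonneg (m : ℕ) (s : ℝ) : 0 ≤ rho m s := by
  unfold rho
  split_ifs with h
  · positivity
  · exact le_refl 0

lemma integrable_stdPdf : Integrable (fun t : ℝ => (Real.sqrt (2*Real.pi))⁻¹ * Real.exp (-t^2/2)) := by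
  have h : ∀ t : ℝ, -t^2/2 = -(1/2 : ℝ) * t^2 := fun t => by ring
  simp_rw [h]
  exact (integrable_exp_neg_mul_sq (by norm_num)).const_mul _

lemma Phi_nonneg (x : ℝ) : 0 ≤ Phi x :=
  setIntegral_nonneg measurableSet_Iic (fun t _ => by positivity)

lemma Phi_mono : Monotone Phi := fun a b hab =>
  setIntegral_mono_set integrable_stdPdf.integrableOn
    (ae_of_all _ fun t => by positivity) (HasSubset.Subset.eventuallyLE (Iic_subset_Iic.2 hab))

lemma measurable_Phi : Measurable Phi := Phi_mono.measurable

lemma gaussianReal_std_Iic (u : ℝ) :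
    gaussianReal 0 1 (Iic u) = ENNReal.ofReal (Phi u) := by
  rw [gaussianReal_apply_eq_integral 0 one_ne_zero]
  unfold Phi
  congr 1
  refine setIntegral_congr_fun measurableSet_Iic (fun t _ => ?_)
  unfold gaussianPDFReal
  norm_num

lemma gaussianReal_Iic (θ : ℝ) (v : ℝ≥0) (hv : 0 < (v:ℝ)) (a : ℝ) :
    gaussianReal θ v (Iic a) = ENNReal.ofReal (Phi ((a - θ) / Real.sqrt v)) := by
  have hsd : 0 < Real.sqrt v := Real.sqrt_pos.2 hv
  have hv1 : (⟨(Real.sqrt v)^2, sq_nonneg _⟩ : ℝ≥0) * 1 = v := by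
    rw [mul_one]
    ext
    exact Real.sq_sqrt hv.le
  have h1 : gaussianReal 0 v = (gaussianReal 0 1).map (fun u => Real.sqrt (v:ℝ) * u) := by
    rw [show (fun u : ℝ => Real.sqrt (v:ℝ) * u) = (Real.sqrt (v:ℝ) * ·) from rfl,
      gaussianReal_map_const_mul, mul_zero]
    exact congrArg (gaussianReal 0) hv1.symm
  have h2 : gaussianReal θ v = (gaussianReal 0 v).map (· + θ) := by
    rw [gaussianReal_map_add_const, zero_add]
  rw [h2, Measure.map_apply (measurable_id'.add_const θ) measurableSet_Iic]
  have e1 : (· + θ) ⁻¹' (Iic a) = Iic (a - θ) := by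
    ext u; simp [le_sub_iff_add_le]
  rw [e1, h1, Measure.map_apply (measurable_const_mul _) measurableSet_Iic]
  have e2 : (fun u : ℝ => Real.sqrt (v:ℝ) * u) ⁻¹' (Iic (a - θ)) = Iic ((a-θ)/Real.sqrt v) := by
    ext u
    simp only [mem_preimage, mem_Iic, le_div_iff₀' hsd]
  rw [e2, gaussianReal_std_Iic]

lemma soft_le_iff {τ b : ℝ} (hτ : 0 < τ) (z : ℝ) :
    Real.sign z * max (|z| - τ) 0 ≤ b ↔ z ≤ b + (if 0 ≤ b then τ else -τ) := by
  rcases le_or_gt 0 b with hb | hb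
  · rw [if_pos hb]
    rcases lt_trichotomy z 0 with hz | hz | hz
    · rw [Real.sign_of_neg hz, abs_of_neg hz]
      rcases le_total (-z - τ) 0 with h0 | h0
      · rw [max_eq_right h0]
        constructor <;> intro h <;> linarith
      · rw [max_eq_left h0]
        constructor <;> intro h <;> linarith
    · subst hz
      rw [Real.sign_zero, zero_mul]
      constructor <;> intro h <;> linarith
    · rw [Real.sign_of_pos hz, abs_of_pos hz, one_mul]
      rcases le_total (z - τ) 0 with h0 | h0
      · rw [max_eq_right h0]
        constructor <;> intro h <;> linarith
      · rw [max_eq_left h0]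
        constructor <;> intro h <;> linarith
  · rw [if_neg (not_le.2 hb)]
    rcases lt_trichotomy z 0 with hz | hz | hz
    · rw [Real.sign_of_neg hz, abs_of_neg hz]
      rcases le_total (-z - τ) 0 with h0 | h0
      · rw [max_eq_right h0]
        constructor <;> intro h <;> linarith
      · rw [max_eq_left h0]
        constructor <;> intro h <;> linarith
    · subst hz
      rw [Real.sign_zero, zero_mul]
      constructor <;> intro h <;> linarith
    · rw [Real.sign_of_pos hz, abs_of_pos hz, one_mul]
      rcases le_total (z - τ) 0 with h0 | h0
      · rw [max_eq_right h0]
        constructor <;> intro h <;> linarith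
      · rw [max_eq_left h0]
        constructor <;> intro h <;> linarith

lemma cdf_aux (n m : ℕ) (hn : 0 < n) (θ σ ξ : ℝ) (hσ : 0 < σ) (hξ : 0 < ξ)
    (β w : ℝ) (A : Set (ℝ × ℝ)) (hA : MeasurableSet A)
    (hslice : ∀ s : ℝ, 0 < s → (fun z => (z, s)) ⁻¹' A = Iic (β + w * s)) :
    (jointMeas n m ξ θ σ A).toReal
      = ∫ s in Ioi (0:ℝ), Phi ((β + w * s - θ) / (σ * ξ / Real.sqrt n)) * rho m s := by
  have hn0 : (0:ℝ) < (n:ℝ) := by exact_mod_cast hn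
  set v : ℝ≥0 := Real.toNNReal (σ^2 * ξ^2 / n) with hv_def
  have hvR : (v:ℝ) = σ^2*ξ^2/(n:ℝ) := Real.coe_toNNReal _ (by positivity)
  have hv : 0 < (v:ℝ) := by rw [hvR]; positivity
  have hsd : Real.sqrt (v:ℝ) = σ * ξ / Real.sqrt n := by
    rw [hvR, show σ^2*ξ^2/(n:ℝ) = (σ*ξ)^2/(n:ℝ) by ring,
      Real.sqrt_div (sq_nonneg _), Real.sqrt_sq (by positivity)]
  have hg : Measurable fun s => ENNReal.ofReal (rho m s) :=
    (measurable_rho m).ennreal_ofReal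
  have hf : Measurable fun s => gaussianReal θ v ((fun z => (z, s)) ⁻¹' A) :=
    measurable_measure_prodMk_right hA
  unfold jointMeas
  rw [Measure.prod_apply_symm hA, ← hv_def,
    lintegral_withDensity_eq_lintegral_mul _ hg hf]
  have hind : (fun s => ((fun s => ENNReal.ofReal (rho m s)) *
        fun s => gaussianReal θ v ((fun z => (z, s)) ⁻¹' A)) s)
      = (Ioi (0:ℝ)).indicator (fun s =>
          ENNReal.ofReal (Phi ((β + w * s - θ) / (σ * ξ / Real.sqrt n)) * rho m s)) := by
    funext s
    by_cases hs : 0 < s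
    · rw [Set.indicator_of_mem (mem_Ioi.mpr hs)]
      simp only [Pi.mul_apply]
      rw [hslice s hs, gaussianReal_Iic θ v hv, hsd,
        ← ENNReal.ofReal_mul (rho_nonneg m s), mul_comm (rho m s)]
    · rw [Set.indicator_of_notMem (by simpa using hs)]
      simp only [Pi.mul_apply]
      rw [show rho m s = 0 from if_neg hs, ENNReal.ofReal_zero, zero_mul]
  rw [hind, lintegral_indicator measurableSet_Ioi]
  rw [integral_eq_lintegral_of_nonneg_ae
    (ae_of_all _ fun s => mul_nonneg (Phi_nonneg _) (rho_nonneg m s))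
    (((measurable_Phi.comp (by fun_prop)).mul (measurable_rho m)).aestronglyMeasurable)]

/-- finite-sample cdf of the scaled and centered feasible
soft-thresholding estimator. -/
theorem stmt_13 (n k : ℕ) (hk : 1 ≤ k) (hkn : k < n) (θ σ ξ η α : ℝ)
    (hσ : 0 < σ) (hξ : 0 < ξ) (hη : 0 < η) (hα : 0 < α) (x : ℝ) :
    (jointMeas n (n - k) ξ θ σ
        {p : ℝ × ℝ | σ⁻¹ * α * (softF σ ξ η p - θ) ≤ x}).toReal =
      (∫ s in Ioi (0 : ℝ),
          Phi (Real.sqrt n * x / (α * ξ) + Real.sqrt n * s * η) * rho (n - k) s) *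
          (if 0 ≤ x / α + θ / σ then 1 else 0)
        + (∫ s in Ioi (0 : ℝ),
            Phi (Real.sqrt n * x / (α * ξ) - Real.sqrt n * s * η) * rho (n - k) s) *
          (if x / α + θ / σ < 0 then 1 else 0) := by
  have hn : 0 < n := lt_of_le_of_lt (Nat.zero_le k) hkn
  have hn0 : (0:ℝ) < (n:ℝ) := by exact_mod_cast hn
  have hsn : (0:ℝ) < Real.sqrt n := Real.sqrt_pos.2 hn0
  have hsoft : Measurable (softF σ ξ η) := by
    unfold softF
    exact (measurable_realSign.comp measurable_fst).mul
      ((measurable_fst.abs.sub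
        (((measurable_snd.const_mul σ).mul_const ξ).mul_const η)).max measurable_const)
  have hA : MeasurableSet {p : ℝ × ℝ | σ⁻¹ * α * (softF σ ξ η p - θ) ≤ x} :=
    measurableSet_le ((hsoft.sub measurable_const).const_mul (σ⁻¹ * α)) measurable_const
  have h1 : ∀ t : ℝ, σ⁻¹ * α * (t - θ) ≤ x ↔ t ≤ θ + σ * x / α := by
    intro t
    rw [show σ⁻¹ * α * (t - θ) = α * (t - θ) / σ by field_simp, div_le_iff₀ hσ,
      show σ * x / α = x * σ / α by ring, ← sub_le_iff_le_add', le_div_iff₀ hα]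
    constructor <;> intro h <;> nlinarith
  have hb_iff : (0 ≤ x / α + θ / σ) ↔ (0 ≤ θ + σ * x / α) := by
    have hid : θ + σ * x / α = σ * (x / α + θ / σ) := by field_simp; ring
    rw [hid]
    exact ⟨fun h => mul_nonneg hσ.le h, fun h => nonneg_of_mul_nonneg_right h hσ⟩
  by_cases hc : 0 ≤ x / α + θ / σ
  · rw [if_pos hc, if_neg (not_lt.2 hc), mul_one, mul_zero, add_zero]
    rw [cdf_aux n (n - k) hn θ σ ξ hσ hξ (θ + σ * x / α) (σ * ξ * η) _ hA ?_]
    · refine setIntegral_congr_fun measurableSet_Ioi (fun s hs => ?_)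
      congr 1
      refine congrArg Phi ?_
      field_simp
      ring
    · intro s hs
      ext z
      simp only [mem_preimage, mem_setOf_eq, mem_Iic, softF]
      rw [h1, soft_le_iff (show (0:ℝ) < σ * s * ξ * η by positivity) z,
        if_pos (hb_iff.1 hc)]
      constructor <;> intro h <;> nlinarith
  · rw [if_neg hc, if_pos (not_le.1 hc), mul_one, mul_zero, zero_add]
    rw [cdf_aux n (n - k) hn θ σ ξ hσ hξ (θ + σ * x / α) (-(σ * ξ * η)) _ hA ?_]
    · refine setIntegral_congr_fun measurableSet_Ioi (fun s hs => ?_)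
      congr 1
      refine congrArg Phi ?_
      field_simp
      ring
    · intro s hs
      ext z
      simp only [mem_preimage, mem_setOf_eq, mem_Iic, softF]
      rw [h1, soft_le_iff (show (0:ℝ) < σ * s * ξ * η by positivity) z,
        if_neg (by rw [← hb_iff]; exact hc)]
      constructor <;> intro h <;> nlinarith
end

section
/- Let ξ_n > 0, η_n > 0 and α_n > 0 be sequences and let k_n be integers with 1 ≤ k_n < n such that n^{1/2} η_n (n − k_n)^{−1/2} → 0 as n → ∞. For each n, θ ∈ ℝ and σ > 0, let Z have law N(θ, σ²ξ_n²/n) and let S be independent of Z with density ρ_{n−k_n}; let μ_{n,θ,σ} denote the law of σ^{−1} α_n (Z·1(|Z| > σξ_nη_n) − θ) (infeasible hard-thresholding) and μ̃_{n,θ,σ} the law of σ^{−1} α_n (Z·1(|Z| > σSξ_nη_n) − θ) (feasible hard-thresholding). Then the total variation distance between μ_{n,θ,σ} and μ̃_{n,θ,σ}, i.e. sup over Borel sets A ⊆ ℝ of |μ_{n,θ,σ}(A) − μ̃_{n,θ,σ}(A)|, tends to 0 as n → ∞ uniformly in θ ∈ ℝ and σ ∈ (0,∞). -/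
open MeasureTheory ProbabilityTheory Filter Set

open scoped NNReal ENNReal

lemma rho_eqOn (m : ℕ) (hm : 1 ≤ m) (q : ℝ) :
    EqOn (fun s : ℝ => s ^ q * rho m s)
      (fun s : ℝ => ((2 : ℝ) ^ ((1 : ℝ) - (m : ℝ) / 2) * (Real.Gamma ((m : ℝ) / 2))⁻¹ *
          (m : ℝ) ^ ((m : ℝ) / 2)) *
        (s ^ ((m : ℝ) - 1 + q) * Real.exp (-((m : ℝ) / 2) * s ^ 2))) (Ioi 0) := by
  intro s hs
  have hs0 : (0 : ℝ) < s := hs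
  have hM0 : (0 : ℝ) < (m : ℝ) := by exact_mod_cast hm
  simp only [rho, if_pos hs0]
  have h1 : ((m : ℝ) * s ^ 2) ^ (((m : ℝ) - 1) / 2)
      = (m : ℝ) ^ (((m : ℝ) - 1) / 2) * s ^ ((m : ℝ) - 1) := by
    rw [Real.mul_rpow hM0.le (sq_nonneg s), ← Real.rpow_natCast s 2,
      ← Real.rpow_mul hs0.le,
      show ((2 : ℕ) : ℝ) * (((m : ℝ) - 1) / 2) = (m : ℝ) - 1 by push_cast; ring]
  have h2 : Real.sqrt (m : ℝ) * (m : ℝ) ^ (((m : ℝ) - 1) / 2) = (m : ℝ) ^ ((m : ℝ) / 2) := by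
    rw [Real.sqrt_eq_rpow, ← Real.rpow_add hM0]
    congr 1; ring
  have h3 : s ^ q * s ^ ((m : ℝ) - 1) = s ^ ((m : ℝ) - 1 + q) := by
    rw [← Real.rpow_add hs0]; congr 1; ring
  have h4 : Real.exp (-(m : ℝ) * s ^ 2 / 2) = Real.exp (-((m : ℝ) / 2) * s ^ 2) := by
    congr 1; ring
  rw [h1, h4]
  calc s ^ q * ((2 : ℝ) ^ ((1 : ℝ) - (m : ℝ) / 2) * (Real.Gamma ((m : ℝ) / 2))⁻¹ *
        Real.sqrt (m : ℝ) * ((m : ℝ) ^ (((m : ℝ) - 1) / 2) * s ^ ((m : ℝ) - 1)) *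
        Real.exp (-((m : ℝ) / 2) * s ^ 2))
      = (2 : ℝ) ^ ((1 : ℝ) - (m : ℝ) / 2) * (Real.Gamma ((m : ℝ) / 2))⁻¹ *
        (Real.sqrt (m : ℝ) * (m : ℝ) ^ (((m : ℝ) - 1) / 2)) *
        ((s ^ q * s ^ ((m : ℝ) - 1)) * Real.exp (-((m : ℝ) / 2) * s ^ 2)) := by ring
    _ = _ := by rw [h2, h3]

lemma rho_integrableOn (m : ℕ) (hm : 1 ≤ m) {q : ℝ} (hq : 0 ≤ q) :
    IntegrableOn (fun s : ℝ => s ^ q * rho m s) (Ioi 0) := by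
  have hM0 : (0 : ℝ) < (m : ℝ) := by exact_mod_cast hm
  have hM1 : (1 : ℝ) ≤ (m : ℝ) := by exact_mod_cast hm
  have h := (integrableOn_rpow_mul_exp_neg_mul_sq (by positivity : (0:ℝ) < (m:ℝ)/2)
    (show (-1 : ℝ) < (m : ℝ) - 1 + q by linarith)).const_mul
    ((2 : ℝ) ^ ((1 : ℝ) - (m : ℝ) / 2) * (Real.Gamma ((m : ℝ) / 2))⁻¹ *
      (m : ℝ) ^ ((m : ℝ) / 2))
  exact IntegrableOn.congr_fun h (fun s hs => ((rho_eqOn m hm q) hs).symm) measurableSet_Ioi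

lemma rho_moment (m : ℕ) (hm : 1 ≤ m) {q : ℝ} (hq : 0 ≤ q) :
    ∫ s in Ioi (0:ℝ), s ^ q * rho m s =
      (2 / (m : ℝ)) ^ (q / 2) * Real.Gamma (((m : ℝ) + q) / 2) / Real.Gamma ((m : ℝ) / 2) := by
  have hM0 : (0 : ℝ) < (m : ℝ) := by exact_mod_cast hm
  have hM1 : (1 : ℝ) ≤ (m : ℝ) := by exact_mod_cast hm
  rw [setIntegral_congr_fun measurableSet_Ioi (rho_eqOn m hm q)]
  rw [MeasureTheory.integral_const_mul]
  have hval : ∫ s in Ioi (0:ℝ), s ^ ((m : ℝ) - 1 + q) * Real.exp (-((m : ℝ) / 2) * s ^ 2)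
      = ((m : ℝ) / 2) ^ (-(((m : ℝ) - 1 + q) + 1) / 2) * (1 / 2) *
        Real.Gamma ((((m : ℝ) - 1 + q) + 1) / 2) := by
    rw [← integral_rpow_mul_exp_neg_mul_rpow (by norm_num : (0:ℝ) < 2)
      (show (-1 : ℝ) < (m : ℝ) - 1 + q by linarith) (by positivity : (0:ℝ) < (m:ℝ)/2)]
    refine setIntegral_congr_fun measurableSet_Ioi (fun s hs => ?_)
    congr 2
    rw [show ((2:ℝ)) = ((2:ℕ) : ℝ) by norm_num, Real.rpow_natCast]
  rw [hval, show ((m : ℝ) - 1 + q) + 1 = (m : ℝ) + q by ring]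
  have hG : Real.Gamma ((m : ℝ) / 2) ≠ 0 := (Real.Gamma_pos_of_pos (by positivity)).ne'
  have hx : ∀ x : ℝ, ((m : ℝ) / 2) ^ x = (m : ℝ) ^ x * (2 : ℝ) ^ (-x) := fun x => by
    rw [Real.div_rpow hM0.le (by norm_num), Real.rpow_neg (by norm_num : (0:ℝ) ≤ 2),
      div_eq_mul_inv]
  have hy : ((2 : ℝ) / (m : ℝ)) ^ (q / 2) = (2 : ℝ) ^ (q / 2) * (m : ℝ) ^ (-(q / 2)) := by
    rw [Real.div_rpow (by norm_num) hM0.le, Real.rpow_neg hM0.le, div_eq_mul_inv]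
  have e2 : (1 / 2 : ℝ) = (2 : ℝ) ^ (-1 : ℝ) := by rw [Real.rpow_neg_one]; norm_num
  have key : (2 : ℝ) ^ ((1 : ℝ) - (m : ℝ) / 2) * (m : ℝ) ^ ((m : ℝ) / 2) *
      (((m : ℝ) / 2) ^ (-((m : ℝ) + q) / 2) * (1 / 2)) = (2 / (m : ℝ)) ^ (q / 2) := by
    rw [hx, hy, e2]
    calc (2 : ℝ) ^ ((1 : ℝ) - (m : ℝ) / 2) * (m : ℝ) ^ ((m : ℝ) / 2) *
          ((m : ℝ) ^ (-((m : ℝ) + q) / 2) * (2 : ℝ) ^ (-(-((m : ℝ) + q) / 2)) *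
            (2 : ℝ) ^ (-1 : ℝ)) =
        ((2 : ℝ) ^ ((1 : ℝ) - (m : ℝ) / 2) * ((2 : ℝ) ^ (-(-((m : ℝ) + q) / 2)) *
            (2 : ℝ) ^ (-1 : ℝ))) *
          ((m : ℝ) ^ ((m : ℝ) / 2) * (m : ℝ) ^ (-((m : ℝ) + q) / 2)) := by ring
      _ = (2 : ℝ) ^ (q / 2) * (m : ℝ) ^ (-(q / 2)) := by
          rw [← Real.rpow_add (by norm_num : (0:ℝ) < 2),
            ← Real.rpow_add (by norm_num : (0:ℝ) < 2), ← Real.rpow_add hM0]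
          congr 1
          · congr 1; ring
          · congr 1; ring
  calc (2 : ℝ) ^ ((1 : ℝ) - (m : ℝ) / 2) * (Real.Gamma ((m : ℝ) / 2))⁻¹ *
        (m : ℝ) ^ ((m : ℝ) / 2) *
        (((m : ℝ) / 2) ^ (-((m : ℝ) + q) / 2) * (1 / 2) * Real.Gamma (((m : ℝ) + q) / 2))
      = ((2 : ℝ) ^ ((1 : ℝ) - (m : ℝ) / 2) * (m : ℝ) ^ ((m : ℝ) / 2) *
          (((m : ℝ) / 2) ^ (-((m : ℝ) + q) / 2) * (1 / 2))) *
        Real.Gamma (((m : ℝ) + q) / 2) * (Real.Gamma ((m : ℝ) / 2))⁻¹ := by ring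
    _ = _ := by rw [key]; ring

lemma rho_eq_nat_pow (p : ℕ) (m : ℕ) :
    EqOn (fun s : ℝ => s ^ (p : ℝ) * rho m s) (fun s : ℝ => s ^ p * rho m s) (Ioi 0) := by
  intro s _; simp only [Real.rpow_natCast]

lemma rho_int_one (m : ℕ) (hm : 1 ≤ m) : ∫ s in Ioi (0:ℝ), rho m s = 1 := by
  have hG : Real.Gamma ((m : ℝ) / 2) ≠ 0 :=
    (Real.Gamma_pos_of_pos (by positivity : (0:ℝ) < (m:ℝ)/2)).ne'
  have h := rho_moment m hm (le_refl (0:ℝ))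
  rw [show ((m:ℝ) + 0) / 2 = (m:ℝ)/2 by ring, show ((0:ℝ)/2) = 0 by norm_num,
    Real.rpow_zero, one_mul, div_self hG] at h
  rw [← h]
  refine setIntegral_congr_fun measurableSet_Ioi (fun s _ => ?_)
  rw [Real.rpow_zero, one_mul]

lemma rho_int_sq (m : ℕ) (hm : 1 ≤ m) : ∫ s in Ioi (0:ℝ), s ^ 2 * rho m s = 1 := by
  have hM0 : (0 : ℝ) < (m : ℝ) := by exact_mod_cast hm
  have hG : Real.Gamma ((m : ℝ) / 2) ≠ 0 :=
    (Real.Gamma_pos_of_pos (by positivity : (0:ℝ) < (m:ℝ)/2)).ne'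
  have h := rho_moment m hm (by norm_num : (0:ℝ) ≤ 2)
  rw [show ((m:ℝ) + 2) / 2 = (m:ℝ)/2 + 1 by ring,
    Real.Gamma_add_one (by positivity : ((m:ℝ)/2) ≠ 0),
    show ((2:ℝ)/2) = 1 by norm_num, Real.rpow_one] at h
  rw [← setIntegral_congr_fun measurableSet_Ioi (rho_eq_nat_pow 2 m),
    show (((2:ℕ)):ℝ) = 2 by norm_num, h]
  field_simp

lemma rho_int_four (m : ℕ) (hm : 1 ≤ m) :
    ∫ s in Ioi (0:ℝ), s ^ 4 * rho m s = ((m : ℝ) + 2) / (m : ℝ) := by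
  have hM0 : (0 : ℝ) < (m : ℝ) := by exact_mod_cast hm
  have hG : Real.Gamma ((m : ℝ) / 2) ≠ 0 :=
    (Real.Gamma_pos_of_pos (by positivity : (0:ℝ) < (m:ℝ)/2)).ne'
  have h := rho_moment m hm (by norm_num : (0:ℝ) ≤ 4)
  rw [show ((m:ℝ) + 4) / 2 = ((m:ℝ)/2 + 1) + 1 by ring,
    Real.Gamma_add_one (by positivity : ((m:ℝ)/2 + 1) ≠ 0),
    Real.Gamma_add_one (by positivity : ((m:ℝ)/2) ≠ 0),
    show ((4:ℝ)/2) = (2:ℕ) by norm_num, Real.rpow_natCast] at h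
  rw [← setIntegral_congr_fun measurableSet_Ioi (rho_eq_nat_pow 4 m),
    show (((4:ℕ)):ℝ) = 4 by norm_num, h]
  field_simp

lemma rho_integrableOn_nat (m : ℕ) (hm : 1 ≤ m) (p : ℕ) :
    IntegrableOn (fun s : ℝ => s ^ p * rho m s) (Ioi 0) :=
  (rho_integrableOn m hm (by positivity : (0:ℝ) ≤ (p:ℝ))).congr_fun
    (rho_eq_nat_pow p m) measurableSet_Ioi

lemma rho_integrableOn_one (m : ℕ) (hm : 1 ≤ m) :
    IntegrableOn (fun s : ℝ => rho m s) (Ioi 0) := by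
  have h := rho_integrableOn_nat m hm 0
  simpa using h

lemma rho_var_bound (m : ℕ) (hm : 1 ≤ m) :
    ∫ s in Ioi (0:ℝ), (s ^ 2 - 1) ^ 2 * rho m s = 2 / (m : ℝ) := by
  have hM0 : (0 : ℝ) < (m : ℝ) := by exact_mod_cast hm
  have h4 := rho_integrableOn_nat m hm 4
  have h2 := (rho_integrableOn_nat m hm 2).const_mul (2 : ℝ)
  have h0 := rho_integrableOn_one m hm
  have heq : (fun s : ℝ => (s ^ 2 - 1) ^ 2 * rho m s)
      = fun s : ℝ => (s ^ 4 * rho m s - 2 * (s ^ 2 * rho m s)) + rho m s := by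
    funext s; ring
  have h42 : IntegrableOn (fun s : ℝ => s ^ 4 * rho m s - 2 * (s ^ 2 * rho m s)) (Ioi 0) := by
    exact h4.sub h2
  rw [heq, integral_add h42 h0, integral_sub h4 h2, MeasureTheory.integral_const_mul,
    rho_int_one m hm, rho_int_sq m hm, rho_int_four m hm]
  field_simp
  ring

lemma rho_support (m : ℕ) {s : ℝ} (hs : s ∉ Ioi (0:ℝ)) : rho m s = 0 := by
  unfold rho
  rw [if_neg (by simpa using hs)]

lemma lintegral_rho_ofReal (m : ℕ) (hm : 1 ≤ m) (g : ℝ → ℝ) (hg : ∀ s, 0 ≤ g s)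
    (hgi : IntegrableOn (fun s => g s * rho m s) (Ioi 0)) :
    ∫⁻ s, ENNReal.ofReal (g s * rho m s) =
      ENNReal.ofReal (∫ s in Ioi (0:ℝ), g s * rho m s) := by
  rw [← setLIntegral_eq_of_support_subset (s := Ioi (0:ℝ))]
  · rw [← ofReal_integral_eq_lintegral_ofReal hgi]
    exact Filter.Eventually.of_forall fun s => mul_nonneg (hg s) (rho_nonneg m s)
  · intro s hs
    by_contra h
    exact hs (by simp [Function.mem_support, rho_support m h, mul_zero] )

lemma withDensity_rho_univ (m : ℕ) (hm : 1 ≤ m) :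
    (volume.withDensity fun s => ENNReal.ofReal (rho m s)) univ = 1 := by
  rw [MeasureTheory.withDensity_apply _ MeasurableSet.univ, Measure.restrict_univ]
  have := lintegral_rho_ofReal m hm (fun _ => 1) (fun _ => zero_le_one)
    (by simpa using rho_integrableOn_one m hm)
  simp only [one_mul] at this
  rw [this, rho_int_one m hm, ENNReal.ofReal_one]

lemma rho_sq1_integrable (m : ℕ) (hm : 1 ≤ m) :
    IntegrableOn (fun s : ℝ => (s ^ 2 - 1) ^ 2 * rho m s) (Ioi 0) := by
  have h : IntegrableOn (fun s : ℝ =>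
      (s ^ 4 * rho m s - 2 * (s ^ 2 * rho m s)) + rho m s) (Ioi 0) := by
    exact ((rho_integrableOn_nat m hm 4).sub
      ((rho_integrableOn_nat m hm 2).const_mul 2)).add (rho_integrableOn_one m hm)
  refine h.congr_fun (fun s _ => by ring) measurableSet_Ioi

lemma rho_abs_moment (m : ℕ) (hm : 1 ≤ m) :
    ∫⁻ s, ENNReal.ofReal |s - 1|
        ∂(volume.withDensity fun s => ENNReal.ofReal (rho m s))
      ≤ ENNReal.ofReal (Real.sqrt (2 / (m : ℝ))) := by
  have hM0 : (0 : ℝ) < (m : ℝ) := by exact_mod_cast hm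
  set δ : ℝ := Real.sqrt (2 / (m : ℝ)) with hδdef
  have hδ : 0 < δ := Real.sqrt_pos.mpr (by positivity)
  have hδ2 : δ ^ 2 = 2 / (m : ℝ) := Real.sq_sqrt (by positivity)
  rw [lintegral_withDensity_eq_lintegral_mul volume
    (f := fun s => ENNReal.ofReal (rho m s)) (g := fun s => ENNReal.ofReal |s - 1|)
    ((measurable_rho m).ennreal_ofReal) (by fun_prop)]
  simp only [Pi.mul_apply]
  have hpt : ∀ s : ℝ, ENNReal.ofReal (rho m s) * ENNReal.ofReal |s - 1|
      ≤ ENNReal.ofReal ((((s ^ 2 - 1) ^ 2 / δ + δ) / 2) * rho m s) := by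
    intro s
    by_cases hs : 0 < s
    · rw [← ENNReal.ofReal_mul (rho_nonneg m s)]
      refine ENNReal.ofReal_le_ofReal ?_
      have key2 : |s - 1| * (2 * δ) ≤ (s ^ 2 - 1) ^ 2 + δ ^ 2 := by
        nlinarith [sq_nonneg (|s - 1| - δ), sq_abs (s - 1),
          mul_nonneg (mul_nonneg (sq_nonneg (s - 1)) hs.le)
            (show (0:ℝ) ≤ s + 2 by linarith)]
      have h1 : |s - 1| ≤ ((s ^ 2 - 1) ^ 2 / δ + δ) / 2 := by
        rw [show ((s ^ 2 - 1) ^ 2 / δ + δ) / 2 = ((s ^ 2 - 1) ^ 2 + δ ^ 2) / (2 * δ) by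
          field_simp]
        rw [le_div_iff₀ (by positivity)]
        linarith
      nlinarith [mul_nonneg (sub_nonneg.mpr h1) (rho_nonneg m s)]
    · rw [rho_support m (by simpa using hs)]
      simp
  refine le_trans (lintegral_mono hpt) ?_
  rw [lintegral_rho_ofReal m hm _ (fun s => by positivity)]
  · have hint : ∫ s in Ioi (0:ℝ), (((s ^ 2 - 1) ^ 2 / δ + δ) / 2) * rho m s = δ := by
      have heq : (fun s : ℝ => (((s ^ 2 - 1) ^ 2 / δ + δ) / 2) * rho m s)
          = fun s : ℝ => (1 / (2 * δ)) * ((s ^ 2 - 1) ^ 2 * rho m s) + (δ / 2) * rho m s := by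
        funext s; field_simp
      rw [heq, integral_add (((rho_sq1_integrable m hm).const_mul _))
        ((rho_integrableOn_one m hm).const_mul _), MeasureTheory.integral_const_mul,
        MeasureTheory.integral_const_mul, rho_var_bound m hm, rho_int_one m hm]
      rw [← hδ2]
      field_simp
      ring
    rw [hint]
  · have h : IntegrableOn (fun s : ℝ =>
        (1 / (2 * δ)) * ((s ^ 2 - 1) ^ 2 * rho m s) + (δ / 2) * rho m s) (Ioi 0) :=
      ((rho_sq1_integrable m hm).const_mul _).add
        ((rho_integrableOn_one m hm).const_mul _)
    exact h.congr_fun (fun s _ => by field_simp) measurableSet_Ioi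

lemma gauss_le_const (θ : ℝ) {v : ℝ≥0} (hv : v ≠ 0) (I : Set ℝ) :
    gaussianReal θ v I
      ≤ ENNReal.ofReal ((Real.sqrt (2 * Real.pi * v))⁻¹) * volume I := by
  rw [gaussianReal_apply θ hv I]
  calc ∫⁻ x in I, gaussianPDF θ v x
      ≤ ∫⁻ _ in I, ENNReal.ofReal ((Real.sqrt (2 * Real.pi * v))⁻¹) := by
        refine lintegral_mono (fun x => ?_)
        refine ENNReal.ofReal_le_ofReal ?_
        unfold gaussianPDFReal
        refine mul_le_of_le_one_right (by positivity) ?_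
        rw [Real.exp_le_one_iff]
        have h1 : 0 ≤ (x - θ) ^ 2 / (2 * (v : ℝ)) := by positivity
        simp only [neg_div]
        linarith
    _ = ENNReal.ofReal ((Real.sqrt (2 * Real.pi * v))⁻¹) * volume I :=
        setLIntegral_const I _

lemma gauss_strip (θ : ℝ) {v : ℝ≥0} (hv : v ≠ 0) (a c : ℝ) (hac : a ≤ c) :
    gaussianReal θ v {z : ℝ | a < |z| ∧ |z| ≤ c}
      ≤ ENNReal.ofReal ((Real.sqrt (2 * Real.pi * v))⁻¹ * (2 * (c - a))) := by
  have hsub : {z : ℝ | a < |z| ∧ |z| ≤ c} ⊆ Ioc a c ∪ Ico (-c) (-a) := by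
    rintro z ⟨h1, h2⟩
    rcases le_or_gt 0 z with hz | hz
    · left; rw [abs_of_nonneg hz] at h1 h2; exact ⟨h1, h2⟩
    · right; rw [abs_of_neg hz] at h1 h2
      exact ⟨by linarith, by linarith⟩
  set K : ℝ := (Real.sqrt (2 * Real.pi * v))⁻¹ with hK
  have hK0 : 0 ≤ K := by positivity
  calc gaussianReal θ v {z : ℝ | a < |z| ∧ |z| ≤ c}
      ≤ gaussianReal θ v (Ioc a c ∪ Ico (-c) (-a)) := measure_mono hsub
    _ ≤ gaussianReal θ v (Ioc a c) + gaussianReal θ v (Ico (-c) (-a)) := measure_union_le _ _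
    _ ≤ ENNReal.ofReal K * volume (Ioc a c) + ENNReal.ofReal K * volume (Ico (-c) (-a)) :=
        add_le_add (gauss_le_const θ hv _) (gauss_le_const θ hv _)
    _ = ENNReal.ofReal K * ENNReal.ofReal (c - a)
        + ENNReal.ofReal K * ENNReal.ofReal (c - a) := by
        rw [Real.volume_Ioc, Real.volume_Ico, show -a - -c = c - a by ring]
    _ = ENNReal.ofReal (K * (2 * (c - a))) := by
        rw [← mul_add, ← ENNReal.ofReal_add (by linarith) (by linarith),
          ← ENNReal.ofReal_mul hK0]
        norm_num
        rw [show c - a + (c - a) = 2 * (c - a) by ring]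

/-- uniform closeness, in total variation distance, of the laws of the
scaled and centered infeasible and feasible hard-thresholding estimators when
`n^{1/2} η_n (n - k_n)^{-1/2} → 0`. -/
theorem stmt_15 (ξ η α : ℕ → ℝ)
    (hξ : ∀ n, 0 < ξ n) (hη : ∀ n, 0 < η n) (hα : ∀ n, 0 < α n)
    (k : ℕ → ℕ) (hk : ∀ n, 2 ≤ n → 1 ≤ k n ∧ k n < n)
    (hr : Tendsto (fun n : ℕ => Real.sqrt n * η n / Real.sqrt ((n - k n : ℕ) : ℝ))
      atTop (nhds 0)) :
    ∀ ε > (0 : ℝ), ∀ᶠ n in atTop, ∀ θ σ : ℝ, 0 < σ → ∀ A : Set ℝ, MeasurableSet A →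
      |((Measure.map
            (fun z : ℝ => σ⁻¹ * α n * ((if σ * ξ n * η n < |z| then z else 0) - θ))
            (gaussianReal θ (Real.toNNReal (σ ^ 2 * ξ n ^ 2 / n)))) A).toReal -
        ((Measure.map (fun p : ℝ × ℝ => σ⁻¹ * α n * (hardF σ (ξ n) (η n) p - θ))
            (jointMeas n (n - k n) (ξ n) θ σ)) A).toReal| < ε := by
  intro ε hε
  have hπ : (0 : ℝ) < Real.sqrt Real.pi := Real.sqrt_pos.mpr Real.pi_pos
  have hev1 : ∀ᶠ n : ℕ in atTop, Real.sqrt (n : ℝ) * η n / Real.sqrt ((n - k n : ℕ) : ℝ)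
      < Real.sqrt Real.pi * ε / 2 :=
    hr.eventually_lt_const (by positivity)
  filter_upwards [hev1, eventually_ge_atTop 2] with n hrn hn2
  intro θ σ hσ A hA
  obtain ⟨hk1, hk2⟩ := hk n hn2
  set m := n - k n with hmdef
  have hm1 : 1 ≤ m := by omega
  have hM0 : (0 : ℝ) < (m : ℝ) := by exact_mod_cast hm1
  have hn0 : (0 : ℝ) < (n : ℝ) := by
    have : 0 < n := by omega
    exact_mod_cast this
  have hξn := hξ n
  have hηn := hη n
  have hαn := hα n
  set b : ℝ := σ * ξ n * η n with hb
  have hb0 : 0 < b := by positivity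
  set v : ℝ≥0 := Real.toNNReal (σ ^ 2 * ξ n ^ 2 / n) with hvdef
  have hvR : (v : ℝ) = σ ^ 2 * ξ n ^ 2 / n := Real.coe_toNNReal _ (by positivity)
  have hv0 : v ≠ 0 := (Real.toNNReal_pos.mpr (by positivity)).ne'
  set G := gaussianReal θ v with hG
  set R := volume.withDensity fun s => ENNReal.ofReal (rho m s) with hR
  haveI hRprob : IsProbabilityMeasure R := ⟨withDensity_rho_univ m hm1⟩
  have hJ : jointMeas n m (ξ n) θ σ = G.prod R := rfl
  set T : ℝ → ℝ := fun z => σ⁻¹ * α n * ((if b < |z| then z else 0) - θ) with hT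
  have hTmeas : Measurable T :=
    (((Measurable.ite (measurableSet_lt measurable_const (by fun_prop))
      measurable_id measurable_const).sub measurable_const).const_mul _)
  set F : ℝ × ℝ → ℝ := fun p => σ⁻¹ * α n * (hardF σ (ξ n) (η n) p - θ) with hF
  have hhard : Measurable (hardF σ (ξ n) (η n)) := by
    unfold hardF
    exact Measurable.ite (measurableSet_lt (by fun_prop) (by fun_prop))
      measurable_fst measurable_const
  have hFmeas : Measurable F := ((hhard.sub measurable_const).const_mul _)
  set E : Set (ℝ × ℝ) := {p | min (σ * p.2 * ξ n * η n) b < |p.1| ∧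
      |p.1| ≤ max (σ * p.2 * ξ n * η n) b} with hE
  have hEmeas : MeasurableSet E := by
    have h1 : Measurable fun p : ℝ × ℝ => min (σ * p.2 * ξ n * η n) b := by fun_prop
    have h2 : Measurable fun p : ℝ × ℝ => |p.1| := by fun_prop
    have h3 : Measurable fun p : ℝ × ℝ => max (σ * p.2 * ξ n * η n) b := by fun_prop
    exact (measurableSet_lt h1 h2).inter (measurableSet_le h2 h3)
  have hFT : ∀ p : ℝ × ℝ, p ∉ E → F p = T p.1 := by
    intro p hp
    simp only [hE, mem_setOf_eq, not_and, not_le] at hp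
    have hiff : (σ * p.2 * ξ n * η n < |p.1|) ↔ (b < |p.1|) := by
      constructor
      · intro h
        by_contra hb'
        push_neg at hb'
        exact absurd (hp ((min_le_left _ _).trans_lt h))
          (not_lt.mpr (hb'.trans (le_max_right _ _)))
      · intro h
        by_contra hts
        push_neg at hts
        exact absurd (hp ((min_le_right _ _).trans_lt h))
          (not_lt.mpr (hts.trans (le_max_left _ _)))
    simp only [hF, hT, hardF, hiff]
  rw [Measure.map_apply hTmeas hA, Measure.map_apply hFmeas hA, hJ]
  have hmarg : G (T ⁻¹' A) = (G.prod R) ((fun p : ℝ × ℝ => T p.1) ⁻¹' A) := by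
    have hset : ((fun p : ℝ × ℝ => T p.1) ⁻¹' A) = (T ⁻¹' A) ×ˢ univ := by
      ext p; simp [Set.mem_prod]
    rw [hset, Measure.prod_prod, measure_univ, mul_one]
  rw [hmarg]
  set B1 : Set (ℝ × ℝ) := (fun p : ℝ × ℝ => T p.1) ⁻¹' A with hB1
  set B2 : Set (ℝ × ℝ) := F ⁻¹' A with hB2
  have hsub1 : B1 ⊆ B2 ∪ E := by
    intro p hp
    by_cases hpE : p ∈ E
    · exact Or.inr hpE
    · exact Or.inl (by rw [hB2, mem_preimage, hFT p hpE]; exact hp)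
  have hsub2 : B2 ⊆ B1 ∪ E := by
    intro p hp
    by_cases hpE : p ∈ E
    · exact Or.inr hpE
    · refine Or.inl ?_
      rw [hB2, mem_preimage, hFT p hpE] at hp
      exact hp
  set d : ℝ := (Real.sqrt (2 * Real.pi * v))⁻¹ * (2 * b) * Real.sqrt (2 / (m : ℝ)) with hd
  have hd0 : (0 : ℝ) ≤ d := by positivity
  have hJE : (G.prod R) E ≤ ENNReal.ofReal d := by
    rw [Measure.prod_apply_symm hEmeas]
    have hsec : ∀ s : ℝ, G ((fun z => (z, s)) ⁻¹' E)
        ≤ ENNReal.ofReal ((Real.sqrt (2 * Real.pi * v))⁻¹ * (2 * b))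
          * ENNReal.ofReal |s - 1| := by
      intro s
      have hpre : ((fun z : ℝ => (z, s)) ⁻¹' E)
          = {z : ℝ | min (σ * s * ξ n * η n) b < |z| ∧
              |z| ≤ max (σ * s * ξ n * η n) b} := rfl
      rw [hpre, hG]
      refine le_trans (gauss_strip θ hv0 _ _ min_le_max) ?_
      have habs : max (σ * s * ξ n * η n) b - min (σ * s * ξ n * η n) b = b * |s - 1| := by
        rw [max_sub_min_eq_abs, abs_sub_comm, show σ * s * ξ n * η n - b = b * (s - 1) by
          rw [hb]; ring, abs_mul, abs_of_pos hb0]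
      rw [habs, show (Real.sqrt (2 * Real.pi * v))⁻¹ * (2 * (b * |s - 1|))
          = ((Real.sqrt (2 * Real.pi * v))⁻¹ * (2 * b)) * |s - 1| by ring,
        ENNReal.ofReal_mul (by positivity)]
    refine le_trans (lintegral_mono hsec) ?_
    rw [lintegral_const_mul _ (by fun_prop)]
    have hfin : ENNReal.ofReal ((Real.sqrt (2 * Real.pi * v))⁻¹ * (2 * b))
          * (lintegral R fun s => ENNReal.ofReal |s - 1|)
        ≤ ENNReal.ofReal ((Real.sqrt (2 * Real.pi * v))⁻¹ * (2 * b))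
          * ENNReal.ofReal (Real.sqrt (2 / (m : ℝ))) :=
      mul_le_mul_right (rho_abs_moment m hm1) _
    rwa [← ENNReal.ofReal_mul (by positivity)] at hfin
  have hkey1 : ((G.prod R) B1).toReal ≤ ((G.prod R) B2).toReal + d := by
    have h : (G.prod R) B1 ≤ (G.prod R) B2 + ENNReal.ofReal d :=
      ((measure_mono hsub1).trans (measure_union_le B2 E)).trans
        (add_le_add_right hJE _)
    have h2 := ENNReal.toReal_mono
      (ENNReal.add_ne_top.mpr ⟨measure_ne_top _ _, ENNReal.ofReal_ne_top⟩) h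
    rwa [ENNReal.toReal_add (measure_ne_top _ _) ENNReal.ofReal_ne_top,
      ENNReal.toReal_ofReal hd0] at h2
  have hkey2 : ((G.prod R) B2).toReal ≤ ((G.prod R) B1).toReal + d := by
    have h : (G.prod R) B2 ≤ (G.prod R) B1 + ENNReal.ofReal d :=
      ((measure_mono hsub2).trans (measure_union_le B1 E)).trans
        (add_le_add_right hJE _)
    have h2 := ENNReal.toReal_mono
      (ENNReal.add_ne_top.mpr ⟨measure_ne_top _ _, ENNReal.ofReal_ne_top⟩) h
    rwa [ENNReal.toReal_add (measure_ne_top _ _) ENNReal.ofReal_ne_top,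
      ENNReal.toReal_ofReal hd0] at h2
  have hdlt : d < ε := by
    have hsn : (0 : ℝ) < Real.sqrt n := Real.sqrt_pos.mpr hn0
    have hsM : (0 : ℝ) < Real.sqrt (m : ℝ) := Real.sqrt_pos.mpr hM0
    have hs2 : (0 : ℝ) < Real.sqrt 2 := by positivity
    have hvsqrt : Real.sqrt (2 * Real.pi * (v : ℝ))
        = Real.sqrt (2 * Real.pi) * (σ * ξ n / Real.sqrt n) := by
      rw [hvR, show 2 * Real.pi * (σ ^ 2 * ξ n ^ 2 / n)
          = (2 * Real.pi) * ((σ * ξ n / Real.sqrt n) ^ 2) by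
          rw [div_pow, Real.sq_sqrt hn0.le]; ring,
        Real.sqrt_mul (by positivity), Real.sqrt_sq (by positivity)]
    have h2M : Real.sqrt (2 / (m : ℝ)) = Real.sqrt 2 / Real.sqrt (m : ℝ) :=
      Real.sqrt_div (by norm_num) _
    have h2π : Real.sqrt (2 * Real.pi) = Real.sqrt 2 * Real.sqrt Real.pi :=
      Real.sqrt_mul (by norm_num) _
    have hdeq : d = 2 * (Real.sqrt n * η n / Real.sqrt (m : ℝ)) / Real.sqrt Real.pi := by
      rw [hd, hvsqrt, h2π, h2M, hb]
      field_simp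
    rw [hdeq, div_lt_iff₀ hπ]
    have : Real.sqrt n * η n / Real.sqrt (m : ℝ) < Real.sqrt Real.pi * ε / 2 := hrn
    nlinarith
  have habs : |((G.prod R) B1).toReal - ((G.prod R) B2).toReal| ≤ d :=
    abs_sub_le_iff.mpr ⟨by linarith, by linarith⟩
  exact lt_of_le_of_lt habs hdlt
end
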